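/- Let H and K be complex Hilbert spaces and let A be a bounded operator on H ⊕ K with block form [[A₁₁, A₁₂],[A₁₂*, A₂₂]] where A₁₁ is an operator on H, A₂₂ is an operator on K, and A₁₂ maps K into H (i.e., A(h, k) = (A₁₁h + A₁₂k, A₁₂*h + A₂₂k)). Then A is positive if and only if A₁₁ and A₂₂ are positive and there exists a bounded operator D from K to H with ‖D‖ ≤ 1 such that A₁₂ = A₁₁^{1/2} · D · A₂₂^{1/2}. -/

import Mathlib

open scoped NNReal
open ContinuousLinearMap

section Helpers

@[simp] theorem block_equiv_symm_fst {α β : Type*} [AddCommGroup α] [AddCommGroup β] (x : α × β) :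
    ((WithLp.equiv 2 (α × β)).symm x).fst = x.fst := rfl

@[simp] theorem block_equiv_symm_snd {α β : Type*} [AddCommGroup α] [AddCommGroup β] (x : α × β) :
    ((WithLp.equiv 2 (α × β)).symm x).snd = x.snd := rfl

variable {E : Type*} [NormedAddCommGroup E] [InnerProductSpace ℂ E] [CompleteSpace E]

theorem block_sqrt_isSelfAdjoint {a : E →L[ℂ] E} (ha : a.IsPositive) :
    IsSelfAdjoint (cfc Real.sqrt a) := cfc_predicate _ _

theorem block_sqrt_comp_self {a : E →L[ℂ] E} (ha : a.IsPositive) :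
    (cfc Real.sqrt a) ∘L (cfc Real.sqrt a) = a := by
  have h0 : (0:E→L[ℂ]E) ≤ a := (nonneg_iff_isPositive a).mpr ha
  have hsa : IsSelfAdjoint a := ha.isSelfAdjoint
  rw [← mul_def, ← cfc_mul ..]
  rw [cfc_congr (g := id) ?_, cfc_id ℝ a]
  intro x hx
  exact Real.mul_self_sqrt (spectrum_nonneg_of_nonneg h0 hx)

theorem block_sqrt_inner {a : E →L[ℂ] E} (ha : a.IsPositive) (x : E) :
    inner (𝕜 := ℂ) (cfc Real.sqrt a x) (cfc Real.sqrt a x) = inner ℂ (a x) x := by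
  have hB := (block_sqrt_isSelfAdjoint ha).adjoint_eq
  conv_rhs => rw [← block_sqrt_comp_self ha]
  simp only [coe_comp', Function.comp_apply]
  conv_lhs => rw [← ContinuousLinearMap.adjoint_inner_left]
  rw [hB]

/-- Douglas-type factorization: if `‖T k‖ ≤ ‖S k‖` pointwise, then `T = W ∘ S` with `‖W‖ ≤ 1`. -/
theorem block_douglas {K : Type*} [NormedAddCommGroup K] [InnerProductSpace ℂ K] [CompleteSpace K]
    (S : K →L[ℂ] K) (T : K →L[ℂ] E) (hST : ∀ k, ‖T k‖ ≤ ‖S k‖) :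
    ∃ W : K →L[ℂ] E, ‖W‖ ≤ 1 ∧ W ∘L S = T := by
  have key : ∀ a b : K, S a = S b → T a = T b := by
    intro a b hab
    have : ‖T a - T b‖ ≤ ‖S a - S b‖ := by simpa [← map_sub] using hST (a - b)
    rw [hab, sub_self, norm_zero] at this
    exact sub_eq_zero.mp (norm_le_zero_iff.mp this)
  set R : Submodule ℂ K := LinearMap.range (S : K →ₗ[ℂ] K) with hR
  set M : Submodule ℂ K := R.topologicalClosure with hM
  haveI : CompleteSpace M := R.isClosed_topologicalClosure.completeSpace_coe
  have hchoose : ∀ y : R, S y.2.choose = (y : K) := fun y => y.2.choose_spec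
  let f₀ : R →ₗ[ℂ] E :=
    { toFun := fun y => T y.2.choose
      map_add' := by
        intro y z
        have h : S ((y + z).2.choose) = S (y.2.choose + z.2.choose) := by
          rw [hchoose, map_add, hchoose, hchoose]; rfl
        simpa [map_add] using key _ _ h
      map_smul' := by
        intro c y
        have h : S ((c • y).2.choose) = S (c • y.2.choose) := by
          rw [hchoose, map_smul, hchoose]; rfl
        simpa [map_smul] using key _ _ h }
  have hf₀ : ∀ y : R, ‖f₀ y‖ ≤ 1 * ‖y‖ := by
    intro y
    have := hST y.2.choose
    rw [hchoose] at this
    simpa [f₀] using this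
  let f₁ : R →L[ℂ] E := f₀.mkContinuous 1 hf₀
  let e₀ : R →ₗ[ℂ] M := Submodule.inclusion R.le_topologicalClosure
  let e : R →L[ℂ] M := e₀.mkContinuous 1 (fun y => by rw [one_mul]; rfl)
  have hdense : DenseRange e := by
    intro m
    refine closure_subtype.mpr ?_
    have h1 : ((m : K)) ∈ closure (R : Set K) := by
      rw [← Submodule.topologicalClosure_coe]
      exact m.2
    refine closure_mono ?_ h1
    rintro x hx
    exact ⟨e ⟨x, hx⟩, ⟨⟨x, hx⟩, rfl⟩, rfl⟩
  have hui : IsUniformInducing e :=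
    (AddMonoidHomClass.isometry_of_norm e (fun y => rfl)).isUniformInducing
  let ext : M →L[ℂ] E := f₁.extend e
  have h_e : ∀ y : R, ‖y‖ ≤ (1 : ℝ≥0) * ‖e y‖ := fun y => by rw [NNReal.coe_one, one_mul]; rfl
  have hext_norm : ‖ext‖ ≤ 1 := by
    have h1 := f₁.opNorm_extend_le (N := 1) hdense h_e
    have hf₁ : ‖f₁‖ ≤ 1 := f₀.mkContinuous_norm_le zero_le_one hf₀
    calc ‖ext‖ = ‖f₁.extend e‖ := rfl
    _ ≤ (1:ℝ≥0) * ‖f₁‖ := h1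
    _ ≤ 1 := by simpa using hf₁
  refine ⟨ext ∘L (Submodule.orthogonalProjectionOnto M : K →L[ℂ] M), ?_, ?_⟩
  · refine opNorm_le_bound _ zero_le_one fun k => ?_
    have h1 : ‖(Submodule.orthogonalProjectionOnto M) k‖ ≤ ‖k‖ := by
      simpa using (Submodule.orthogonalProjectionOnto M).le_of_opNorm_le (Submodule.orthogonalProjectionOnto_norm_le M) k
    calc ‖(ext ∘L (Submodule.orthogonalProjectionOnto M : K →L[ℂ] M)) k‖
        = ‖ext ((Submodule.orthogonalProjectionOnto M) k)‖ := rfl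
    _ ≤ ‖ext‖ * ‖(Submodule.orthogonalProjectionOnto M) k‖ := le_opNorm _ _
    _ ≤ 1 * ‖k‖ := mul_le_mul hext_norm h1 (norm_nonneg _) zero_le_one
  · ext k
    have hmem : S k ∈ R := ⟨k, rfl⟩
    have hproj : Submodule.orthogonalProjectionOnto M (S k) = e ⟨S k, hmem⟩ := by
      apply Subtype.ext
      rw [Submodule.coe_orthogonalProjectionOnto_apply, Submodule.starProjection_eq_self_iff.mpr (R.le_topologicalClosure hmem)]
      rfl
    show ext (Submodule.orthogonalProjectionOnto M (S k)) = T k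
    rw [hproj, ContinuousLinearMap.extend_eq _ hdense hui]
    show T (Exists.choose hmem) = T k
    exact key _ _ (hchoose ⟨S k, hmem⟩)

end Helpers

set_option maxHeartbeats 1000000 in
theorem block_operator_positive_iff
    {H K : Type*} [NormedAddCommGroup H] [InnerProductSpace ℂ H] [CompleteSpace H]
    [NormedAddCommGroup K] [InnerProductSpace ℂ K] [CompleteSpace K]
    (A₁₁ : H →L[ℂ] H) (A₂₂ : K →L[ℂ] K) (A₁₂ : K →L[ℂ] H)
    (A : WithLp 2 (H × K) →L[ℂ] WithLp 2 (H × K))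
    (hA : ∀ (h : H) (k : K), A ((WithLp.equiv 2 (H × K)).symm (h, k)) =
        (WithLp.equiv 2 (H × K)).symm
          (A₁₁ h + A₁₂ k, (ContinuousLinearMap.adjoint A₁₂) h + A₂₂ k)) :
    A.IsPositive ↔
      A₁₁.IsPositive ∧ A₂₂.IsPositive ∧
        ∃ D : K →L[ℂ] H, ‖D‖ ≤ 1 ∧
          A₁₂ = (cfc Real.sqrt A₁₁) ∘L D ∘L (cfc Real.sqrt A₂₂) := by
  have hxy : ∀ x y : WithLp 2 (H × K),
      inner (𝕜 := ℂ) (A x) y =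
        inner ℂ (A₁₁ x.fst) y.fst + inner ℂ (A₁₂ x.snd) y.fst +
          (inner ℂ ((ContinuousLinearMap.adjoint A₁₂) x.fst) y.snd +
            inner ℂ (A₂₂ x.snd) y.snd) := by
    intro x y
    have h1 : A x = (WithLp.equiv 2 (H × K)).symm
        (A₁₁ x.fst + A₁₂ x.snd, (ContinuousLinearMap.adjoint A₁₂) x.fst + A₂₂ x.snd) :=
      hA x.fst x.snd
    rw [h1, WithLp.prod_inner_apply]
    simp [inner_add_left]
  constructor
  · -- forward direction
    intro hpos
    have hsymm : ∀ x y : WithLp 2 (H × K), inner (𝕜 := ℂ) (A x) y = inner ℂ x (A y) :=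
      (isSelfAdjoint_iff_isSymmetric.mp hpos.isSelfAdjoint)
    -- positivity of the diagonal blocks
    have hιH : ∀ h : H, ((WithLp.equiv 2 (H × K)).symm (h, 0) : WithLp 2 (H × K)).fst = h := fun _ => rfl
    have h11 : A₁₁.IsPositive := by
      constructor
      · skip
        intro h h'
        have e1 := hxy ((WithLp.equiv 2 (H × K)).symm (h, 0)) ((WithLp.equiv 2 (H × K)).symm (h', 0))
        have e2 := hxy ((WithLp.equiv 2 (H × K)).symm (h', 0)) ((WithLp.equiv 2 (H × K)).symm (h, 0))
        simp only [block_equiv_symm_fst, block_equiv_symm_snd, map_zero, inner_zero_left,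
          inner_zero_right, add_zero, zero_add] at e1 e2
        have e3 := hsymm ((WithLp.equiv 2 (H × K)).symm (h, 0)) ((WithLp.equiv 2 (H × K)).symm (h', 0))
        rw [e1] at e3
        refine e3.trans ?_
        conv_lhs => rw [← inner_conj_symm, e2]
        rw [inner_conj_symm]
        rfl
      · intro h
        have e1 := hxy ((WithLp.equiv 2 (H × K)).symm (h, 0)) ((WithLp.equiv 2 (H × K)).symm (h, 0))
        simp only [block_equiv_symm_fst, block_equiv_symm_snd, map_zero, inner_zero_left,
          inner_zero_right, add_zero, zero_add] at e1
        have := hpos.re_inner_nonneg_left ((WithLp.equiv 2 (H × K)).symm (h, 0))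
        rw [e1] at this
        exact this
    have h22 : A₂₂.IsPositive := by
      constructor
      · skip
        intro k k'
        have e1 := hxy ((WithLp.equiv 2 (H × K)).symm (0, k)) ((WithLp.equiv 2 (H × K)).symm (0, k'))
        have e2 := hxy ((WithLp.equiv 2 (H × K)).symm (0, k')) ((WithLp.equiv 2 (H × K)).symm (0, k))
        simp only [block_equiv_symm_fst, block_equiv_symm_snd, map_zero, inner_zero_left,
          inner_zero_right, add_zero, zero_add] at e1 e2
        have e3 := hsymm ((WithLp.equiv 2 (H × K)).symm (0, k)) ((WithLp.equiv 2 (H × K)).symm (0, k'))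
        rw [e1] at e3
        refine e3.trans ?_
        conv_lhs => rw [← inner_conj_symm, e2]
        rw [inner_conj_symm]
        rfl
      · intro k
        have e1 := hxy ((WithLp.equiv 2 (H × K)).symm (0, k)) ((WithLp.equiv 2 (H × K)).symm (0, k))
        simp only [block_equiv_symm_fst, block_equiv_symm_snd, map_zero, inner_zero_left,
          inner_zero_right, add_zero, zero_add] at e1
        have := hpos.re_inner_nonneg_left ((WithLp.equiv 2 (H × K)).symm (0, k))
        rw [e1] at this
        exact this
    refine ⟨h11, h22, ?_⟩
    -- square roots
    set B : WithLp 2 (H × K) →L[ℂ] WithLp 2 (H × K) := cfc Real.sqrt A with hBdef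
    set R₁ : H →L[ℂ] H := cfc Real.sqrt A₁₁ with hR₁def
    set R₂ : K →L[ℂ] K := cfc Real.sqrt A₂₂ with hR₂def
    -- the columns of the square root of A
    let ιH : H →L[ℂ] WithLp 2 (H × K) :=
      (WithLp.prodContinuousLinearEquiv 2 ℂ H K).symm.toContinuousLinearMap ∘L
        ContinuousLinearMap.inl ℂ H K
    let ιK : K →L[ℂ] WithLp 2 (H × K) :=
      (WithLp.prodContinuousLinearEquiv 2 ℂ H K).symm.toContinuousLinearMap ∘L
        ContinuousLinearMap.inr ℂ H K
    have hιHa : ∀ h : H, ιH h = (WithLp.equiv 2 (H × K)).symm (h, 0) := fun _ => rfl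
    have hιKa : ∀ k : K, ιK k = (WithLp.equiv 2 (H × K)).symm (0, k) := fun _ => rfl
    let T₁ : H →L[ℂ] WithLp 2 (H × K) := B ∘L ιH
    let T₂ : K →L[ℂ] WithLp 2 (H × K) := B ∘L ιK
    have hT₁ : ∀ h : H, ‖T₁ h‖ = ‖R₁ h‖ := by
      intro h
      have e1 : inner (𝕜 := ℂ) (T₁ h) (T₁ h) = inner ℂ (R₁ h) (R₁ h) := by
        show inner (𝕜 := ℂ) (B (ιH h)) (B (ιH h)) = _
        rw [hBdef, block_sqrt_inner hpos, hR₁def, block_sqrt_inner h11]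
        have := hxy (ιH h) (ιH h)
        rw [hιHa] at this ⊢
        simpa only [block_equiv_symm_fst, block_equiv_symm_snd, map_zero, inner_zero_left,
          inner_zero_right, add_zero, zero_add] using this
      have e2 := congrArg (RCLike.re (K := ℂ)) e1
      rw [inner_self_eq_norm_sq (𝕜 := ℂ), inner_self_eq_norm_sq (𝕜 := ℂ)] at e2
      rw [← Real.sqrt_sq (norm_nonneg (T₁ h)), ← Real.sqrt_sq (norm_nonneg (R₁ h)), e2]
    have hT₂ : ∀ k : K, ‖T₂ k‖ = ‖R₂ k‖ := by
      intro k
      have e1 : inner (𝕜 := ℂ) (T₂ k) (T₂ k) = inner ℂ (R₂ k) (R₂ k) := by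
        show inner (𝕜 := ℂ) (B (ιK k)) (B (ιK k)) = _
        rw [hBdef, block_sqrt_inner hpos, hR₂def, block_sqrt_inner h22]
        have := hxy (ιK k) (ιK k)
        rw [hιKa] at this ⊢
        simpa only [block_equiv_symm_fst, block_equiv_symm_snd, map_zero, inner_zero_left,
          inner_zero_right, add_zero, zero_add] using this
      have e2 := congrArg (RCLike.re (K := ℂ)) e1
      rw [inner_self_eq_norm_sq (𝕜 := ℂ), inner_self_eq_norm_sq (𝕜 := ℂ)] at e2
      rw [← Real.sqrt_sq (norm_nonneg (T₂ k)), ← Real.sqrt_sq (norm_nonneg (R₂ k)), e2]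
    obtain ⟨W₁, hW₁n, hW₁⟩ := block_douglas R₁ T₁ (fun h => le_of_eq (hT₁ h))
    obtain ⟨W₂, hW₂n, hW₂⟩ := block_douglas R₂ T₂ (fun k => le_of_eq (hT₂ k))
    refine ⟨(ContinuousLinearMap.adjoint W₁) ∘L W₂, ?_, ?_⟩
    · calc ‖(ContinuousLinearMap.adjoint W₁) ∘L W₂‖
          ≤ ‖ContinuousLinearMap.adjoint W₁‖ * ‖W₂‖ := opNorm_comp_le _ _
      _ = ‖W₁‖ * ‖W₂‖ := by rw [LinearIsometryEquiv.norm_map]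
      _ ≤ 1 * 1 := mul_le_mul hW₁n hW₂n (norm_nonneg _) zero_le_one
      _ = 1 := one_mul 1
    · -- A₁₂ = T₁† ∘L T₂
      have hfac : A₁₂ = (ContinuousLinearMap.adjoint T₁) ∘L T₂ := by
        ext k
        refine ext_inner_right ℂ fun h => ?_
        rw [coe_comp', Function.comp_apply, ContinuousLinearMap.adjoint_inner_left]
        show inner ℂ (A₁₂ k) h = inner (𝕜 := ℂ) (B (ιK k)) (B (ιH h))
        rw [← ContinuousLinearMap.adjoint_inner_left B, (block_sqrt_isSelfAdjoint hpos).adjoint_eq]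
        have : B (B (ιK k)) = A (ιK k) := by
          rw [show B (B (ιK k)) = (B ∘L B) (ιK k) from rfl, block_sqrt_comp_self hpos]
        rw [this]
        have e1 := hxy (ιK k) (ιH h)
        rw [hιKa, hιHa] at e1
        simp only [block_equiv_symm_fst, block_equiv_symm_snd, map_zero, inner_zero_left,
          inner_zero_right, add_zero, zero_add] at e1
        rw [← hιKa, ← hιHa] at e1
        rw [e1]
      rw [hfac, ← hW₁, ← hW₂, adjoint_comp]
      rw [(block_sqrt_isSelfAdjoint h11).adjoint_eq]
      ext k
      rfl
  · rintro ⟨h11, h22, D, hD, hfac⟩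
    set R₁ : H →L[ℂ] H := cfc Real.sqrt A₁₁ with hR₁def
    set R₂ : K →L[ℂ] K := cfc Real.sqrt A₂₂ with hR₂def
    have hs11 : ∀ u v : H, inner (𝕜 := ℂ) (A₁₁ u) v = inner ℂ u (A₁₁ v) := fun u v =>
      isSelfAdjoint_iff_isSymmetric.mp h11.isSelfAdjoint u v
    have hs22 : ∀ u v : K, inner (𝕜 := ℂ) (A₂₂ u) v = inner ℂ u (A₂₂ v) := fun u v =>
      isSelfAdjoint_iff_isSymmetric.mp h22.isSelfAdjoint u v
    have hsR1 : ∀ u v : H, inner (𝕜 := ℂ) (R₁ u) v = inner ℂ u (R₁ v) := fun u v => by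
      rw [hR₁def]
      exact isSelfAdjoint_iff_isSymmetric.mp (block_sqrt_isSelfAdjoint h11) u v
    constructor
    · skip
      intro x y
      show inner (𝕜 := ℂ) (A x) y = inner ℂ x (A y)
      rw [hxy x y]
      conv_rhs => rw [← inner_conj_symm, hxy y x]
      simp only [map_add, inner_conj_symm]
      rw [hs11 x.fst y.fst, hs22 x.snd y.snd, ContinuousLinearMap.adjoint_inner_left,
        ContinuousLinearMap.adjoint_inner_right]
      ring
    · intro x
      have e1 : A.reApplyInnerSelf x = RCLike.re (inner (𝕜 := ℂ) (A x) x) := rfl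
      rw [e1, hxy]
      have q11 : inner (𝕜 := ℂ) (A₁₁ x.fst) x.fst = inner ℂ (R₁ x.fst) (R₁ x.fst) :=
        (block_sqrt_inner h11 x.fst).symm
      have q22 : inner (𝕜 := ℂ) (A₂₂ x.snd) x.snd = inner ℂ (R₂ x.snd) (R₂ x.snd) :=
        (block_sqrt_inner h22 x.snd).symm
      have q12 : inner (𝕜 := ℂ) (A₁₂ x.snd) x.fst = inner ℂ (D (R₂ x.snd)) (R₁ x.fst) := by
        rw [hfac]
        exact hsR1 (D (R₂ x.snd)) x.fst
      have q21 : inner (𝕜 := ℂ) ((ContinuousLinearMap.adjoint A₁₂) x.fst) x.snd =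
          (starRingEnd ℂ) (inner (𝕜 := ℂ) (A₁₂ x.snd) x.fst) := by
        rw [ContinuousLinearMap.adjoint_inner_left, ← inner_conj_symm]
      rw [q11, q22, q12, q21, q12]
      simp only [map_add, inner_self_eq_norm_sq (𝕜 := ℂ), RCLike.conj_re]
      have hb : |RCLike.re (inner (𝕜 := ℂ) (D (R₂ x.snd)) (R₁ x.fst))| ≤ ‖R₂ x.snd‖ * ‖R₁ x.fst‖ := by
        refine le_trans (RCLike.abs_re_le_norm _) ?_
        refine le_trans (norm_inner_le_norm _ _) ?_
        have : ‖D (R₂ x.snd)‖ ≤ ‖R₂ x.snd‖ := by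
          simpa using D.le_of_opNorm_le hD (R₂ x.snd)
        exact mul_le_mul_of_nonneg_right this (norm_nonneg _)
      have h1 := (abs_le.mp hb).1
      set r : ℝ := RCLike.re (inner (𝕜 := ℂ) (D (R₂ x.snd)) (R₁ x.fst)) with hrdef
      set a : ℝ := ‖R₁ x.fst‖ with hadef
      set b : ℝ := ‖R₂ x.snd‖ with hbdef
      nlinarith [sq_nonneg (a - b), h1]
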